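/- Let $K \to L$ be a finite extension of fields of characteristic $0$, and $L \to M$ a further finite field extension. Then there exists a finite field extension $K \to E$ such that the $L$-algebra $E \otimes_K L$ decomposes as a finite product $\prod_{i=1}^n M_i$ of fields, where each extension $L \to M_i$ factors through $L \to M$ (i.e., admits an $L$-embedding $M \to M_i$). -/

import Mathlib

/-!
Statement 12: Let `K → L` be a finite extension of fields of characteristic `0`, and `L → M`
a further finite field extension.  Then there exists a finite field extension `K → E` such
that the `L`-algebra `E ⊗[K] L` decomposes as a finite product `∏ᵢ Mᵢ` of fields, where each
extension `L → Mᵢ` factors through `L → M` (i.e. admits an `L`-embedding `M → Mᵢ`).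
-/

universe u

open scoped TensorProduct
set_option synthInstance.maxHeartbeats 1000000
set_option maxHeartbeats 4000000

theorem exists_finite_extension_tensor_decomposes
    (K L M : Type u) [Field K] [Field L] [Field M]
    [CharZero K] [Algebra K L] [FiniteDimensional K L]
    [Algebra L M] [FiniteDimensional L M] :
    ∃ (E : Type u) (_ : Field E) (_ : Algebra K E), FiniteDimensional K E ∧
      ∃ (n : ℕ) (Mi : Fin n → Type u) (_ : ∀ i, Field (Mi i)) (_ : ∀ i, Algebra L (Mi i)),
        Nonempty ((L ⊗[K] E) ≃ₐ[L] ((i : Fin n) → Mi i)) ∧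
        ∀ i, Nonempty (M →ₐ[L] Mi i) := by
  classical
  letI : Algebra K M := ((algebraMap L M).comp (algebraMap K L)).toAlgebra
  haveI : IsScalarTower K L M := IsScalarTower.of_algebraMap_eq' rfl
  haveI : FiniteDimensional K M := FiniteDimensional.trans K L M
  let Ω := AlgebraicClosure M
  let E : IntermediateField K Ω := IntermediateField.normalClosure K M Ω
  haveI : Normal K E := normalClosure.normal K M Ω
  haveI : FiniteDimensional K E := normalClosure.is_finiteDimensional K M Ω
  refine ⟨E, inferInstance, inferInstance, inferInstance, ?_⟩
  -- a `K`-embedding of `M` into `E`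
  let θ : M →ₐ[K] E := (IsScalarTower.toAlgHom K M Ω).codRestrict E.toSubalgebra
      (fun m => (IsScalarTower.toAlgHom K M Ω).fieldRange_le_normalClosure ⟨m, rfl⟩)
  set A := L ⊗[K] (E : Type u) with hA
  letI : CommRing A := inferInstanceAs (CommRing (L ⊗[K] (E : Type u)))
  letI : Algebra L A := inferInstanceAs (Algebra L (L ⊗[K] (E : Type u)))
  letI : Algebra K A := inferInstanceAs (Algebra K (L ⊗[K] (E : Type u)))
  haveI : Algebra.IsSeparable K E := Algebra.IsSeparable.of_integral K E
  haveI : Algebra.FormallyUnramified K E := Algebra.FormallyUnramified.of_isSeparable K E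
  haveI : IsReduced A := Algebra.FormallyUnramified.isReduced_of_field L A
  haveI : IsArtinianRing A := isArtinian_of_tower L inferInstance
  let S := {I : Ideal A | I.IsMaximal}
  haveI : Finite S := (IsArtinianRing.setOfPred_isMaximal_finite A).to_subtype
  letI fS : Fintype S := Fintype.ofFinite S
  let n := Fintype.card S
  let e : Fin n ≃ S := (fS.equivFin).symm
  let J : Fin n → Ideal A := fun i => (e i).1
  have hJmax : ∀ i, (J i).IsMaximal := fun i => (e i).2
  letI : ∀ i, Field (A ⧸ J i) := fun i => @Ideal.Quotient.field A _ (J i) (hJmax i)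
  -- the natural map
  let Φ : A →ₐ[L] ∀ i, A ⧸ J i := Pi.algHom L (fun i => A ⧸ J i) (fun i => Ideal.Quotient.mkₐ L (J i))
  have hΦ : ∀ (x : A) (i : Fin n), Φ x i = Ideal.Quotient.mk (J i) x := fun _ _ => by
    simp [Φ]
  have hmem : ∀ x : A, (∀ i, x ∈ J i) → x = 0 := by
    intro x hx
    have hnil : IsNilpotent x := by
      rw [nilpotent_iff_mem_prime]
      intro p hp
      have hm : p.IsMaximal := (IsArtinianRing.isPrime_iff_isMaximal p).mp hp
      have := hx (e.symm ⟨p, hm⟩)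
      simpa [J, e.apply_symm_apply] using this
    exact hnil.eq_zero
  have hinj : Function.Injective Φ := by
    rw [injective_iff_map_eq_zero]
    intro x hx
    refine hmem x fun i => ?_
    rw [← Ideal.Quotient.eq_zero_iff_mem, ← hΦ x i, hx]
    rfl
  have hsurj : Function.Surjective Φ := by
    have hco : Pairwise (Function.onFun IsCoprime J) := by
      intro i j hij
      refine Ideal.isCoprime_iff_sup_eq.mpr (Ideal.IsMaximal.coprime_of_ne (hJmax i) (hJmax j) ?_)
      intro h
      exact hij (e.injective (Subtype.ext h))
    have h1 := Ideal.quotientInfToPiQuotient_surj hco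
    have h2 : ⇑Φ = (Ideal.quotientInfToPiQuotient J) ∘ (Ideal.Quotient.mk (⨅ i, J i)) := by
      funext x
      funext i
      rw [hΦ, Function.comp_apply, Ideal.quotientInfToPiQuotient_mk']
    rw [h2]
    exact h1.comp Ideal.Quotient.mk_surjective
  refine ⟨n, fun i => A ⧸ J i, inferInstance, inferInstance,
    ⟨AlgEquiv.ofBijective Φ ⟨hinj, hsurj⟩⟩, ?_⟩
  intro i
  -- embed `M` into `A ⧸ J i` over `L`
  let F := A ⧸ J i
  let σF : (E : Type u) →ₐ[K] F :=
    (Ideal.Quotient.mkₐ K (J i)).comp (Algebra.TensorProduct.includeRight)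
  refine IntermediateField.nonempty_algHom_of_splits (F := L) (E := M) (K := F) ?_
  intro x
  refine ⟨IsIntegral.of_finite L x, ?_⟩
  have hKsplit : ((minpoly K x).map (algebraMap K E)).Splits := by
    have h := Normal.splits (inferInstance : Normal K E) (θ x)
    rwa [minpoly.algHom_eq θ θ.injective] at h
  have hKF : ((minpoly K x).map (algebraMap K F)).Splits := by
    have h := hKsplit.map σF.toRingHom
    rw [Polynomial.map_map] at h
    rw [← σF.comp_algebraMap]
    exact h
  have hmap : (((minpoly K x).map (algebraMap K L)).map (algebraMap L F)).Splits := by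
    rw [Polynomial.map_map, ← IsScalarTower.algebraMap_eq]
    exact hKF
  refine Polynomial.Splits.of_dvd hmap ?_ (Polynomial.map_dvd _ (minpoly.dvd_map_of_isScalarTower K L x))
  exact Polynomial.map_ne_zero (Polynomial.map_ne_zero (minpoly.ne_zero (IsIntegral.of_finite K x)))
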